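/- arXiv:2206.03468 — 2 statements merged into one kernel-verified Lean document; each statement's English description precedes it below -/
import Mathlib

section
/- Let N > 0 be real, let k be a positive integer, and let D̃ be a real number with 0 < D̃ < 1. Set η = ⌈(D̃/(1 − D̃))·k⌉. Consider the linear program: minimize λ_0·N/k + λ_η·N/(k + η) over real λ_0, λ_η subject to λ_0·0/k + λ_η·η/(k + η) ≤ D̃, λ_0 + λ_η = 1, and λ_0, λ_η ≥ 0. Then the value (N/k)·(1 − D̃) is the minimum of this program: it is attained by λ_0 = 1 − (D̃/η)(k + η), λ_η = (D̃/η)(k + η), and every feasible (λ_0, λ_η) yields objective value at least (N/k)·(1 − D̃). -/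
/-- For real `N > 0`, a positive integer `k` and a distortion budget `0 < D̃ < 1`,
with `η = ⌈(D̃/(1-D̃))·k⌉`, the value `(N/k)·(1-D̃)` is the minimum of the linear
program minimizing `λ_0·N/k + λ_η·N/(k+η)` subject to
`λ_0·0/k + λ_η·η/(k+η) ≤ D̃`, `λ_0 + λ_η = 1`, `λ_0, λ_η ≥ 0`:
it is attained at `λ_0 = 1 - (D̃/η)(k+η)`, `λ_η = (D̃/η)(k+η)`, and every feasible
point has objective value at least `(N/k)·(1-D̃)`. -/
theorem pruw_two_section_lp_minimum (N : ℝ) (hN : 0 < N) (k : ℕ) (hk : 0 < k)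
    (D : ℝ) (hD0 : 0 < D) (hD1 : D < 1) :
    let η : ℤ := ⌈D / (1 - D) * (k : ℝ)⌉
    let lam0 : ℝ := 1 - D / (η : ℝ) * ((k : ℝ) + (η : ℝ))
    let lamEta : ℝ := D / (η : ℝ) * ((k : ℝ) + (η : ℝ))
    (lam0 * (0 / (k : ℝ)) + lamEta * ((η : ℝ) / ((k : ℝ) + (η : ℝ))) ≤ D ∧
      lam0 + lamEta = 1 ∧ 0 ≤ lam0 ∧ 0 ≤ lamEta ∧
      lam0 * (N / (k : ℝ)) + lamEta * (N / ((k : ℝ) + (η : ℝ)))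
        = N / (k : ℝ) * (1 - D)) ∧
    ∀ l0 lEta : ℝ,
      l0 * (0 / (k : ℝ)) + lEta * ((η : ℝ) / ((k : ℝ) + (η : ℝ))) ≤ D →
      l0 + lEta = 1 → 0 ≤ l0 → 0 ≤ lEta →
      N / (k : ℝ) * (1 - D) ≤ l0 * (N / (k : ℝ)) + lEta * (N / ((k : ℝ) + (η : ℝ))) := by
  intro η lam0 lamEta
  have hk' : (0:ℝ) < (k:ℝ) := by exact_mod_cast hk
  have h1D : 0 < 1 - D := by linarith
  have hx : 0 < D / (1 - D) * (k:ℝ) := by positivity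
  have hη1 : (0:ℤ) < η := Int.ceil_pos.mpr hx
  have hηpos : (0:ℝ) < (η:ℝ) := by exact_mod_cast hη1
  have hkη : (0:ℝ) < (k:ℝ) + (η:ℝ) := by linarith
  have hceil : D / (1 - D) * (k:ℝ) ≤ (η:ℝ) := Int.le_ceil _
  have hkey : D * ((k:ℝ) + (η:ℝ)) ≤ (η:ℝ) := by
    have h2 := mul_le_mul_of_nonneg_right hceil h1D.le
    rw [div_mul_eq_mul_div, div_mul_cancel₀ _ h1D.ne'] at h2
    nlinarith
  constructor
  · refine ⟨?_, ?_, ?_, ?_, ?_⟩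
    · have : lamEta * ((η:ℝ) / ((k:ℝ) + (η:ℝ))) = D := by
        show D / (η:ℝ) * ((k:ℝ) + (η:ℝ)) * ((η:ℝ) / ((k:ℝ) + (η:ℝ))) = D
        field_simp
      simp [this]
    · show 1 - D / (η:ℝ) * ((k:ℝ) + (η:ℝ)) + D / (η:ℝ) * ((k:ℝ) + (η:ℝ)) = 1
      ring
    · show 0 ≤ 1 - D / (η:ℝ) * ((k:ℝ) + (η:ℝ))
      rw [sub_nonneg, div_mul_eq_mul_div, div_le_one hηpos]
      linarith
    · show 0 ≤ D / (η:ℝ) * ((k:ℝ) + (η:ℝ))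
      positivity
    · show (1 - D / (η:ℝ) * ((k:ℝ) + (η:ℝ))) * (N / (k:ℝ))
          + D / (η:ℝ) * ((k:ℝ) + (η:ℝ)) * (N / ((k:ℝ) + (η:ℝ))) = N / (k:ℝ) * (1 - D)
      field_simp
      ring
  · intro l0 lEta hc hs h0 hE
    have h2 : lEta * (η:ℝ) ≤ D * ((k:ℝ) + (η:ℝ)) := by
      have hc' : lEta * ((η:ℝ) / ((k:ℝ) + (η:ℝ))) ≤ D := by
        simpa using hc
      rw [mul_div_assoc'] at hc'
      exact (div_le_iff₀ hkη).mp hc'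
    have hl0 : l0 = 1 - lEta := by linarith
    have hdiff : l0 * (N / (k:ℝ)) + lEta * (N / ((k:ℝ) + (η:ℝ))) - N / (k:ℝ) * (1 - D)
        = (D * ((k:ℝ) + (η:ℝ)) - lEta * (η:ℝ)) * N / ((k:ℝ) * ((k:ℝ) + (η:ℝ))) := by
      rw [hl0]
      field_simp
      ring
    have hnn : 0 ≤ (D * ((k:ℝ) + (η:ℝ)) - lEta * (η:ℝ)) * N / ((k:ℝ) * ((k:ℝ) + (η:ℝ))) := by
      apply div_nonneg
      · exact mul_nonneg (by linarith) hN.le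
      · positivity
    linarith
end

section
/- Let F be a field, let N be a natural number with N ≥ 3, and let k = ⌊N/2⌋ − 1. Let α_1, …, α_N ∈ F be pairwise distinct, let f_1, …, f_k ∈ F be pairwise distinct, and suppose f_i ≠ α_n for all i, n. Let c_1, …, c_k, c'_1, …, c'_k ∈ F and let P, P' ∈ F[x] be polynomials of degree at most ⌊N/2⌋. If Σ_{i=1}^{k} c_i/(f_i − α_n) + P(α_n) = Σ_{i=1}^{k} c'_i/(f_i − α_n) + P'(α_n) for every n ∈ {1, …, N}, then c_i = c'_i for all i and P = P'. (Consequently, in the reading phase of the PRUW scheme, the ⌊N/2⌋ − 1 desired parameters of each subpacket are correctly decodable from the N answers.) -/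
open Polynomial

/-- Decodability in the reading phase of the PRUW scheme: with `N ≥ 3` databases,
`k = ⌊N/2⌋ - 1`, pairwise distinct evaluation points `α_n`, pairwise distinct
constants `f_i` (all distinct from every `α_n`), parameters `c_i, c'_i` and noise
polynomials `P, P'` of degree at most `⌊N/2⌋`: if the `N` answers agree, i.e.,
`Σ_i c_i/(f_i - α_n) + P(α_n) = Σ_i c'_i/(f_i - α_n) + P'(α_n)` for all `n`,
then `c = c'` and `P = P'`. -/
theorem pruw_reading_phase_decodable {F : Type*} [Field F]
    (N : ℕ) (hN : 3 ≤ N)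
    (α : Fin N → F) (hα : Function.Injective α)
    (f : Fin (N / 2 - 1) → F) (hf : Function.Injective f)
    (hfα : ∀ i n, f i ≠ α n)
    (c c' : Fin (N / 2 - 1) → F) (P P' : F[X])
    (hP : P.degree ≤ (N / 2 : ℕ)) (hP' : P'.degree ≤ (N / 2 : ℕ))
    (hans : ∀ n : Fin N,
      ∑ i, c i / (f i - α n) + P.eval (α n)
        = ∑ i, c' i / (f i - α n) + P'.eval (α n)) :
    c = c' ∧ P = P' := by
  classical
  set d : Fin (N / 2 - 1) → F := fun i => c i - c' i with hd
  set Q : F[X] := ∏ j, (C (f j) - X) with hQ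
  set S : F[X] := ∑ i, C (d i) * ∏ j ∈ Finset.univ.erase i, (C (f j) - X) with hS
  set R : F[X] := S + (P - P') * Q with hR
  have hQeval : ∀ x : F, Q.eval x = ∏ j, (f j - x) := by
    intro x; simp [hQ, eval_prod]
  have hSeval : ∀ x : F, S.eval x = ∑ i, d i * ∏ j ∈ Finset.univ.erase i, (f j - x) := by
    intro x; simp [hS, eval_prod, eval_finset_sum]
  -- R vanishes at every α n
  have hRzero : ∀ n : Fin N, R.eval (α n) = 0 := by
    intro n
    have hne : ∀ i, f i - α n ≠ 0 := fun i => sub_ne_zero_of_ne (hfα i n)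
    have h1 : ∑ i, d i / (f i - α n) + (P - P').eval (α n) = 0 := by
      simp only [hd, sub_div, Finset.sum_sub_distrib, eval_sub]
      linear_combination hans n
    have h2 : S.eval (α n) = (∑ i, d i / (f i - α n)) * ∏ j, (f j - α n) := by
      rw [hSeval, Finset.sum_mul]
      refine Finset.sum_congr rfl fun i _ => ?_
      rw [← Finset.mul_prod_erase _ _ (Finset.mem_univ i)]
      have := hne i
      field_simp
    have : R.eval (α n)
        = (∑ i, d i / (f i - α n) + (P - P').eval (α n)) * ∏ j, (f j - α n) := by
      rw [hR, eval_add, eval_mul, hQeval, h2, add_mul]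
    rw [this, h1, zero_mul]
  -- degree bound
  have hRdeg : R.natDegree < N := by
    have hlin : ∀ j : Fin (N / 2 - 1), (C (f j) - X).natDegree ≤ 1 := by
      intro j
      simpa using natDegree_sub_le (C (f j)) X
    have hSd : S.natDegree ≤ N - 1 := by
      rw [hS]
      refine Polynomial.natDegree_sum_le_of_forall_le _ _ fun i _ => ?_
      refine le_trans (natDegree_mul_le) ?_
      have hb := Finset.sum_le_card_nsmul (Finset.univ.erase i)
        (fun j => (C (f j) - X).natDegree) 1 (fun j _ => hlin j)
      have hp := le_trans
        (Polynomial.natDegree_prod_le (Finset.univ.erase i) (fun j => C (f j) - X))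
        (by simpa using hb)
      have hc : (Finset.univ.erase i).card = N / 2 - 1 - 1 := by
        simp [Finset.card_erase_of_mem]
      simp only [natDegree_C, zero_add]
      omega
    have hMd : ((P - P') * Q).natDegree ≤ N - 1 := by
      refine le_trans natDegree_mul_le ?_
      have h1 : (P - P').natDegree ≤ N / 2 := by
        have := Polynomial.natDegree_sub_le P P'
        have hp1 : P.natDegree ≤ N / 2 := natDegree_le_iff_degree_le.2 hP
        have hp2 : P'.natDegree ≤ N / 2 := natDegree_le_iff_degree_le.2 hP'
        omega
      have h2 : Q.natDegree ≤ N / 2 - 1 := by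
        rw [hQ]
        refine le_trans (Polynomial.natDegree_prod_le _ _) ?_
        have hb2 := Finset.sum_le_card_nsmul Finset.univ
          (fun j => (C (f j) - X).natDegree) 1 (fun j _ => hlin j)
        simp only [Finset.card_univ, Fintype.card_fin, smul_eq_mul, mul_one] at hb2
        exact hb2
      omega
    have h4 := Polynomial.natDegree_add_le S ((P - P') * Q)
    rw [← hR] at h4
    omega
  have hR0 : R = 0 := by
    refine Polynomial.eq_zero_of_natDegree_lt_card_of_eval_eq_zero R hα hRzero ?_
    simpa using hRdeg
  -- extract c = c'
  have hd0 : ∀ i, d i = 0 := by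
    intro i0
    have hev : R.eval (f i0) = 0 := by rw [hR0]; simp
    have hQ0 : Q.eval (f i0) = 0 := by
      rw [hQeval]
      exact Finset.prod_eq_zero (Finset.mem_univ i0) (by simp)
    have hSv : S.eval (f i0) = d i0 * ∏ j ∈ Finset.univ.erase i0, (f j - f i0) := by
      rw [hSeval]
      refine Finset.sum_eq_single i0 (fun i _ hne => ?_) (by simp)
      have hz : (f i0 - f i0) = 0 := by ring
      exact mul_eq_zero_of_right _
        (Finset.prod_eq_zero (Finset.mem_erase.2 ⟨Ne.symm hne, Finset.mem_univ i0⟩) hz)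
    have hprod : (∏ j ∈ Finset.univ.erase i0, (f j - f i0)) ≠ 0 := by
      refine Finset.prod_ne_zero_iff.2 fun j hj => ?_
      exact sub_ne_zero_of_ne (fun h => (Finset.mem_erase.1 hj).1 (hf h))
    have hmz : d i0 * ∏ j ∈ Finset.univ.erase i0, (f j - f i0) = 0 := by
      have h5 := hev
      rw [hR, eval_add, eval_mul, hQ0, mul_zero, add_zero, hSv] at h5
      exact h5
    exact (mul_eq_zero.1 hmz).resolve_right hprod
  have hcc : c = c' := by
    funext i
    have := hd0 i
    simp only [hd] at this
    exact sub_eq_zero.1 this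
  refine ⟨hcc, ?_⟩
  have hS0 : S = 0 := by
    rw [hS]
    refine Finset.sum_eq_zero fun i _ => ?_
    rw [hd0 i, map_zero, zero_mul]
  have hPQ : (P - P') * Q = 0 := by
    have h6 := hR0
    rw [hR, hS0, zero_add] at h6
    exact h6
  have hQne : Q ≠ 0 := by
    intro h
    have h7 : Q.eval (α ⟨0, by omega⟩) = 0 := by rw [h]; simp
    rw [hQeval] at h7
    exact (Finset.prod_ne_zero_iff.2 fun j _ =>
      sub_ne_zero_of_ne (hfα j ⟨0, by omega⟩)) h7
  have := (mul_eq_zero.1 hPQ).resolve_right hQne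
  exact sub_eq_zero.1 this
end
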